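/- Let d ≥ 2, let k be an integer with 1 ≤ k ≤ d, and let β be a real number with 1/d ≤ β ≤ k/d. Then there exists a probability vector λ : Fin d → ℝ (λᵢ ≥ 0, Σᵢ λᵢ = 1) with at most k nonzero entries such that Σᵢ √λᵢ = √(d·β). -/

import Mathlib

open scoped BigOperators

/-- For `1 ≤ k ≤ d` and `1/d ≤ β ≤ k/d`, there is a probability vector on `Fin d`
with at most `k` nonzero entries whose square roots sum to `√(dβ)`. -/
theorem exists_probVec_rank_le_with_overlap (d k : ℕ) (hd : 2 ≤ d)
    (hk1 : 1 ≤ k) (hk2 : k ≤ d)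
    (β : ℝ) (hβ1 : 1 / (d : ℝ) ≤ β) (hβ2 : β ≤ (k : ℝ) / d) :
    ∃ lam : Fin d → ℝ, (∀ i, 0 ≤ lam i) ∧ (∑ i, lam i = 1) ∧
      (Finset.univ.filter (fun i : Fin d => lam i ≠ 0)).card ≤ k ∧
      ∑ i, Real.sqrt (lam i) = Real.sqrt (d * β) := by
  have hkR : (0:ℝ) < (k:ℝ) := by exact_mod_cast hk1
  have hdR : (0:ℝ) < (d:ℝ) := by
    have : 0 < d := by omega
    exact_mod_cast this
  set s := Real.sqrt (d * β) with hs
  set g : ℝ → ℝ := fun t => Real.sqrt (1 - t + t / k) + ((k:ℝ) - 1) * Real.sqrt (t / k)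
    with hgdef
  have hg0 : g 0 = 1 := by simp [hgdef]
  have hg1 : g 1 = Real.sqrt k := by
    have h1 : (1:ℝ) - 1 + 1 / k = 1 / k := by ring
    have h2 : Real.sqrt ((k:ℝ)) = (k:ℝ) * Real.sqrt (1/k) := by
      rw [show (k:ℝ) * Real.sqrt (1/k) = Real.sqrt ((k:ℝ)^2) * Real.sqrt (1/k) by
        rw [Real.sqrt_sq hkR.le]]
      rw [← Real.sqrt_mul (by positivity)]
      congr 1
      field_simp
    simp only [hgdef, h1]
    rw [h2]; ring
  have hcont : ContinuousOn g (Set.Icc 0 1) := by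
    apply ContinuousOn.add
    · exact (Real.continuous_sqrt.comp (by continuity)).continuousOn
    · exact (continuous_const.mul (Real.continuous_sqrt.comp (by continuity))).continuousOn
  have hs1 : 1 ≤ s := by
    rw [hs, show (1:ℝ) = Real.sqrt 1 by simp]
    apply Real.sqrt_le_sqrt
    calc (1:ℝ) = d * (1/d) := by field_simp
    _ ≤ d * β := by
      apply mul_le_mul_of_nonneg_left hβ1 hdR.le
  have hs2 : s ≤ Real.sqrt k := by
    apply Real.sqrt_le_sqrt
    calc (d:ℝ) * β ≤ d * (k/d) := mul_le_mul_of_nonneg_left hβ2 hdR.le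
    _ = k := by field_simp
  have hmem : s ∈ Set.Icc (g 0) (g 1) := by rw [hg0, hg1]; exact ⟨hs1, hs2⟩
  obtain ⟨t, ht, hgt⟩ := intermediate_value_Icc (by norm_num : (0:ℝ) ≤ 1) hcont hmem
  obtain ⟨ht0, ht1⟩ := ht
  set A : ℝ := 1 - t + t / k with hA
  set B : ℝ := t / k with hB
  have hAnn : 0 ≤ A := by
    have : 0 ≤ t / k := by positivity
    have : (0:ℝ) ≤ 1 - t := by linarith
    rw [hA]; positivity
  have hBnn : 0 ≤ B := by rw [hB]; positivity
  set F : ℕ → ℝ := fun n => if n < k then (if n = 0 then A else B) else 0 with hF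
  refine ⟨fun i => F i.val, ?_, ?_, ?_, ?_⟩
  · intro i
    simp only [hF]
    split_ifs
    · exact hAnn
    · exact hBnn
    · exact le_rfl
  · rw [Fin.sum_univ_eq_sum_range F d]
    rw [← Finset.sum_subset (Finset.range_subset_range.mpr hk2) (by
      intro x _ hx
      simp only [Finset.mem_range, not_lt] at hx
      simp [hF, Nat.not_lt.mpr hx])]
    have : ∀ n ∈ Finset.range k, F n = B + (if n = 0 then A - B else 0) := by
      intro n hn
      simp only [Finset.mem_range] at hn
      simp only [hF, if_pos hn]
      split_ifs <;> ring
    rw [Finset.sum_congr rfl this, Finset.sum_add_distrib,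
      Finset.sum_ite_eq' (Finset.range k) 0 (fun _ => A - B)]
    simp only [Finset.mem_range, hk1, Finset.sum_const, Finset.card_range, nsmul_eq_mul]
    rw [if_pos (by omega : 0 < k)]
    rw [hA, hB]
    field_simp
    ring
  · apply le_trans (Finset.card_le_card ?_) ?_
    · exact Finset.univ.filter fun i : Fin d => (i:ℕ) < k
    · intro i hi
      simp only [Finset.mem_filter, Finset.mem_univ, true_and] at hi ⊢
      by_contra h
      exact hi (by simp [hF, h])
    · have himg : (Finset.univ.filter fun i : Fin d => (i:ℕ) < k)
          = Finset.univ.image (Fin.castLE hk2) := by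
        ext i
        simp only [Finset.mem_filter, Finset.mem_image, Finset.mem_univ, true_and]
        constructor
        · intro h; exact ⟨⟨i, h⟩, rfl⟩
        · rintro ⟨j, rfl⟩; exact j.2
      rw [himg, Finset.card_image_of_injective _ (Fin.castLE_injective hk2),
        Finset.card_univ, Fintype.card_fin]
  · rw [Fin.sum_univ_eq_sum_range (fun n => Real.sqrt (F n)) d]
    rw [← Finset.sum_subset (Finset.range_subset_range.mpr hk2) (by
      intro x _ hx
      simp only [Finset.mem_range, not_lt] at hx
      simp [hF, Nat.not_lt.mpr hx])]
    have : ∀ n ∈ Finset.range k, Real.sqrt (F n)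
        = Real.sqrt B + (if n = 0 then Real.sqrt A - Real.sqrt B else 0) := by
      intro n hn
      simp only [Finset.mem_range] at hn
      simp only [hF, if_pos hn]
      split_ifs <;> ring
    rw [Finset.sum_congr rfl this, Finset.sum_add_distrib,
      Finset.sum_ite_eq' (Finset.range k) 0 (fun _ => Real.sqrt A - Real.sqrt B)]
    simp only [Finset.mem_range, Finset.sum_const, Finset.card_range, nsmul_eq_mul]
    rw [if_pos (by omega : 0 < k)]
    rw [← hgt]
    simp only [hgdef]
    rw [hA, hB]
    ring
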